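/- arXiv:1803.07837 — 4 statements merged into one kernel-verified Lean document; each statement's English description precedes it below -/
import Mathlib

section
/- Let κ > 0, α > 0, β ∈ ℝ, and let τ be a C² solution of τ'' = 2κ/τ with τ(0) = α, τ'(0) = β, defined on its maximal interval of existence and with τ > 0. Then τ(t) ≥ exp(-(β² - 4κ ln α)/(4κ)) for all t in the interval of existence. In particular τ stays uniformly bounded away from 0. -/
open Set

/-- The solution of τ'' = 2κ/τ stays uniformly bounded away from 0:
    τ(t) ≥ exp(−(β² − 4κ ln α)/(4κ)). -/
theorem stmt_1 (κ α β T : ℝ) (hκ : 0 < κ) (hα : 0 < α) (hT : 0 < T)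
    (τ τ' : ℝ → ℝ)
    (hpos : ∀ t ∈ Ico (0:ℝ) T, 0 < τ t)
    (hτ : ∀ t ∈ Ico (0:ℝ) T, HasDerivAt τ (τ' t) t)
    (hτ' : ∀ t ∈ Ico (0:ℝ) T, HasDerivAt τ' (2 * κ / τ t) t)
    (h0 : τ 0 = α) (h0' : τ' 0 = β) :
    ∀ t ∈ Ico (0:ℝ) T,
      Real.exp (-(β ^ 2 - 4 * κ * Real.log α) / (4 * κ)) ≤ τ t := by
  set E : ℝ → ℝ := fun x => (τ' x) ^ 2 - 4 * κ * Real.log (τ x) with hEdef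
  have hE : ∀ x ∈ Ico (0:ℝ) T, HasDerivAt E 0 x := by
    intro x hx
    have h1 := (hτ' x hx).fun_pow 2
    have h2 := ((hτ x hx).log (hpos x hx).ne').const_mul (4 * κ)
    have h3 := h1.fun_sub h2
    convert h3 using 1
    · rfl
    · rfl
    field_simp
    ring
  intro t ht
  have hEt : E t = E 0 := by
    have hsub : Icc (0:ℝ) t ⊆ Ico (0:ℝ) T := fun x hx =>
      ⟨hx.1, lt_of_le_of_lt hx.2 ht.2⟩
    have hsub' : Ico (0:ℝ) t ⊆ Ico (0:ℝ) T := fun x hx =>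
      ⟨hx.1, lt_trans hx.2 ht.2⟩
    exact constant_of_has_deriv_right_zero
      (fun x hx => (hE x (hsub hx)).continuousAt.continuousWithinAt)
      (fun x hx => (hE x (hsub' hx)).hasDerivWithinAt) t ⟨ht.1, le_refl t⟩
  have hE0 : E 0 = β ^ 2 - 4 * κ * Real.log α := by
    simp [hEdef, h0, h0']
  have hτt := hpos t ht
  have hlog : -(β ^ 2 - 4 * κ * Real.log α) / (4 * κ) ≤ Real.log (τ t) := by
    have hnn : (0:ℝ) ≤ (τ' t) ^ 2 := sq_nonneg _
    have : 4 * κ * Real.log (τ t) = (τ' t) ^ 2 - (β ^ 2 - 4 * κ * Real.log α) := by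
      have := hEt.trans hE0
      simp only [hEdef] at this
      linarith
    rw [div_le_iff₀ (by positivity)]
    nlinarith
  calc Real.exp (-(β ^ 2 - 4 * κ * Real.log α) / (4 * κ))
      ≤ Real.exp (Real.log (τ t)) := Real.exp_le_exp.mpr hlog
    _ = τ t := Real.exp_log hτt
end

section
/- Let κ > 0, ε, ν ≥ 0, and let τ be a positive C² solution on [0,T) of τ'' = 2κ/τ + ε²/τ³ − ν τ'/τ² with τ(0) = α, τ'(0) = β. Then τ(t) ≥ exp(−C/(4κ)) for all t ∈ [0,T), where C = β² − 4κ ln α + ε²/(2α²). In particular the solution extends globally in time. -/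
open Set

/-- Lower bound for solutions of τ'' = 2κ/τ + ε²/τ³ − ν τ'/τ²:
    τ(t) ≥ exp(−C/(4κ)) with C = β² − 4κ ln α + ε²/(2α²). -/
theorem stmt_5 (κ α β ε ν T : ℝ) (hκ : 0 < κ) (hα : 0 < α)
    (hε : 0 ≤ ε) (hν : 0 ≤ ν) (hT : 0 < T)
    (τ τ' : ℝ → ℝ)
    (hpos : ∀ t ∈ Ico (0:ℝ) T, 0 < τ t)
    (hτ : ∀ t ∈ Ico (0:ℝ) T, HasDerivAt τ (τ' t) t)
    (hτ' : ∀ t ∈ Ico (0:ℝ) T,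
      HasDerivAt τ' (2 * κ / τ t + ε ^ 2 / (τ t) ^ 3 - ν * τ' t / (τ t) ^ 2) t)
    (h0 : τ 0 = α) (h0' : τ' 0 = β) :
    ∀ t ∈ Ico (0:ℝ) T,
      Real.exp (-(β ^ 2 - 4 * κ * Real.log α + ε ^ 2 / (2 * α ^ 2)) / (4 * κ)) ≤ τ t := by
  set C : ℝ := β ^ 2 - 4 * κ * Real.log α + ε ^ 2 / (2 * α ^ 2) with hC
  set F : ℝ → ℝ := fun s => τ' s ^ 2 + ε ^ 2 / (τ s) ^ 2 - 4 * κ * Real.log (τ s) with hFdef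
  have hF : ∀ s ∈ Ico (0:ℝ) T,
      HasDerivAt F (-2 * ν * (τ' s) ^ 2 / (τ s) ^ 2) s := by
    intro s hs
    have hτs : 0 < τ s := hpos s hs
    have hτne : τ s ≠ 0 := hτs.ne'
    have h1 := (hτ' s hs).pow 2
    have h2 := (hτ s hs).pow 2
    have h3 : HasDerivAt (fun u => ε ^ 2 / (τ u) ^ 2)
        ((0 * τ s ^ 2 - ε ^ 2 * (2 * τ s ^ 1 * τ' s)) / ((τ s) ^ 2) ^ 2) s :=
      (hasDerivAt_const s (ε ^ 2)).div h2 (pow_ne_zero 2 hτne)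
    have h4 := ((hτ s hs).log hτne).const_mul (4 * κ)
    have h5 := (h1.add h3).sub h4
    convert h5 using 1
    · rfl
    · rfl
    · rfl
    field_simp
    ring
  intro t ht
  have hsub : Icc (0:ℝ) t ⊆ Ico (0:ℝ) T := fun x hx => ⟨hx.1, lt_of_le_of_lt hx.2 ht.2⟩
  have key : F t ≤ F 0 := by
    rcases eq_or_lt_of_le ht.1 with h0t | h0t
    · rw [← h0t]
    · have hcont : ContinuousOn F (Icc 0 t) := fun x hx =>
        ((hF x (hsub hx)).continuousAt).continuousWithinAt
      have hint : interior (Icc (0:ℝ) t) = Ioo 0 t := interior_Icc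
      have hdiff : DifferentiableOn ℝ F (interior (Icc (0:ℝ) t)) := by
        rw [hint]
        intro x hx
        exact ((hF x (hsub ⟨hx.1.le, hx.2.le⟩)).differentiableAt).differentiableWithinAt
      have hderiv : ∀ x ∈ interior (Icc (0:ℝ) t), deriv F x ≤ 0 := by
        rw [hint]
        intro x hx
        have hx' : x ∈ Ico (0:ℝ) T := hsub ⟨hx.1.le, hx.2.le⟩
        rw [(hF x hx').deriv]
        have : 0 < τ x := hpos x hx'
        have h1 : 0 ≤ ν * (τ' x) ^ 2 := by positivity
        have h2 : 0 < (τ x) ^ 2 := by positivity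
        rw [div_nonpos_iff]
        right
        exact ⟨by nlinarith, h2.le⟩
      have := antitoneOn_of_deriv_nonpos (convex_Icc 0 t) hcont hdiff hderiv
        (left_mem_Icc.mpr ht.1) (right_mem_Icc.mpr ht.1) ht.1
      exact this
  have hτt : 0 < τ t := hpos t ht
  have hF0 : F 0 = β ^ 2 + ε ^ 2 / α ^ 2 - 4 * κ * Real.log α := by
    simp [hFdef, h0, h0']
  -- Show -4κ log(τ t) ≤ C
  have hlog : -(4 * κ) * Real.log (τ t) ≤ C := by
    rcases le_or_gt α (τ t) with hcase | hcase
    · have hlog2 : Real.log α ≤ Real.log (τ t) := Real.log_le_log hα hcase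
      have hεα : 0 ≤ ε ^ 2 / (2 * α ^ 2) := by positivity
      rw [hC]; nlinarith
    · -- τ t < α, so ε²/(τ t)² ≥ ε²/α²
      have hq : ε ^ 2 / α ^ 2 ≤ ε ^ 2 / (τ t) ^ 2 := by
        apply div_le_div_of_nonneg_left (by positivity) (by positivity)
        nlinarith
      have hFt : τ' t ^ 2 + ε ^ 2 / (τ t) ^ 2 - 4 * κ * Real.log (τ t) ≤ F 0 := key
      have hsq : 0 ≤ τ' t ^ 2 := sq_nonneg _
      have hεα : 0 ≤ ε ^ 2 / (2 * α ^ 2) := by positivity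
      rw [hC]
      rw [hF0] at hFt
      nlinarith
  have h4κ : (0:ℝ) < 4 * κ := by linarith
  have hdiv : -C / (4 * κ) ≤ Real.log (τ t) := by
    rw [div_le_iff₀ h4κ]
    nlinarith
  calc Real.exp (-C / (4 * κ)) ≤ Real.exp (Real.log (τ t)) := Real.exp_le_exp.mpr hdiv
    _ = τ t := Real.exp_log hτt
end

section
/- Let f, g : ℝ^d → [0,∞) be integrable with ∫f = ∫g and g > 0 a.e. Then ‖f − g‖_{L¹(ℝ^d)}² ≤ 2 ‖f‖_{L¹(ℝ^d)} ∫_{ℝ^d} f(x) ln(f(x)/g(x)) dx (Csiszár–Kullback inequality). -/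
open MeasureTheory


/-- log x ≥ 1 - 1/x for x > 0 -/
lemma log_ge (x : ℝ) (hx : 0 < x) : 1 - 1/x ≤ Real.log x := by
  have h := Real.log_le_sub_one_of_pos (show (0:ℝ) < x⁻¹ by positivity)
  rw [Real.log_inv] at h
  have : 1/x = x⁻¹ := one_div x
  linarith

/-- G x = (x+1) log x - 2(x-1) is nonneg on [1,∞), nonpos on (0,1]. -/
lemma G_deriv (x : ℝ) (hx : 0 < x) :
    HasDerivAt (fun y => (y+1)*Real.log y - 2*(y-1)) (Real.log x + 1/x - 1) x := by
  have h1 : HasDerivAt (fun y : ℝ => (y+1)*Real.log y) (1 * Real.log x + (x+1)*(1/x)) x := by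
    have := ((hasDerivAt_id x).add_const 1).mul (Real.hasDerivAt_log (ne_of_gt hx))
    exact this.congr_deriv (by simp only [id]; ring)
  have h2 := h1.sub (((hasDerivAt_id x).sub_const 1).const_mul 2)
  refine h2.congr_deriv ?_
  field_simp
  ring

lemma G_sign_pos {x : ℝ} (hx : 1 ≤ x) : 0 ≤ (x+1)*Real.log x - 2*(x-1) := by
  have mono : MonotoneOn (fun y => (y+1)*Real.log y - 2*(y-1)) (Set.Ici 1) := by
    apply monotoneOn_of_deriv_nonneg (convex_Ici 1)
    · apply ContinuousOn.sub
      · exact (continuousOn_id.add continuousOn_const).mul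
          (Real.continuousOn_log.mono (by intro y hy; simp at hy ⊢; linarith))
      · fun_prop
    · intro y hy
      rw [interior_Ici] at hy
      exact ((G_deriv y (by linarith [hy.out])).differentiableAt).differentiableWithinAt
    · intro y hy
      rw [interior_Ici] at hy
      have hy1 : (1:ℝ) < y := hy
      rw [(G_deriv y (by linarith)).deriv]
      have := log_ge y (by linarith)
      linarith
  have := mono (Set.self_mem_Ici) (Set.mem_Ici.2 hx) hx
  simpa using this

lemma G_sign_neg {x : ℝ} (hx0 : 0 < x) (hx : x ≤ 1) : (x+1)*Real.log x - 2*(x-1) ≤ 0 := by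
  have mono : MonotoneOn (fun y => (y+1)*Real.log y - 2*(y-1)) (Set.Icc x 1) := by
    apply monotoneOn_of_deriv_nonneg (convex_Icc x 1)
    · apply ContinuousOn.sub
      · exact (continuousOn_id.add continuousOn_const).mul
          (Real.continuousOn_log.mono (by intro y hy; simp at hy ⊢; intro h; nlinarith [hy.1]))
      · fun_prop
    · intro y hy
      rw [interior_Icc] at hy
      exact ((G_deriv y (lt_of_lt_of_le hx0 hy.1.le)).differentiableAt).differentiableWithinAt
    · intro y hy
      rw [interior_Icc] at hy
      have hy0 : 0 < y := lt_of_lt_of_le hx0 hy.1.le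
      rw [(G_deriv y hy0).deriv]
      have := log_ge y hy0
      linarith
  have := mono (Set.mem_Icc.2 ⟨le_refl x, hx⟩) (Set.mem_Icc.2 ⟨hx, le_refl 1⟩) hx
  simpa using this


lemma F_deriv (x : ℝ) (hx : 0 < x) :
    HasDerivAt (fun y => (2*y+4)*(y*Real.log y - y + 1) - 3*(y-1)^2)
      (4*((x+1)*Real.log x - 2*(x-1))) x := by
  have hlog := Real.hasDerivAt_log (ne_of_gt hx)
  have h1 : HasDerivAt (fun y : ℝ => y * Real.log y) (Real.log x + 1) x := by
    have := (hasDerivAt_id x).mul hlog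
    refine this.congr_deriv ?_
    simp only [id]; field_simp
  have h2 : HasDerivAt (fun y : ℝ => y*Real.log y - y + 1) (Real.log x + 1 - 1) x :=
    (h1.sub (hasDerivAt_id x)).add_const 1
  have h3 : HasDerivAt (fun y : ℝ => 2*y+4) 2 x := by
    simpa using ((hasDerivAt_id x).const_mul 2).add_const 4
  have h4 := h3.mul h2
  have h5 : HasDerivAt (fun y : ℝ => 3*(y-1)^2) (3*(2*(x-1))) x := by
    have := (((hasDerivAt_id x).sub_const 1).pow 2).const_mul 3
    simpa using this
  have := h4.sub h5
  refine this.congr_deriv ?_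
  ring

lemma F_nonneg {x : ℝ} (hx : 0 < x) :
    0 ≤ (2*x+4)*(x*Real.log x - x + 1) - 3*(x-1)^2 := by
  set F : ℝ → ℝ := fun y => (2*y+4)*(y*Real.log y - y + 1) - 3*(y-1)^2 with hF
  have hF1 : F 1 = 0 := by simp [hF]
  have contF : ∀ s : Set ℝ, s ⊆ Set.Ioi 0 → ContinuousOn F s := by
    intro s hs
    have hlogc : ContinuousOn (fun y : ℝ => y * Real.log y) s :=
      continuousOn_id.mul (Real.continuousOn_log.mono
        (by intro y hy; exact ne_of_gt (hs hy)))
    apply ContinuousOn.sub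
    · exact (by fun_prop : ContinuousOn (fun y : ℝ => 2*y+4) s).mul
        ((hlogc.sub continuousOn_id).add continuousOn_const)
    · fun_prop
  rcases le_or_gt 1 x with h1 | h1
  · have mono : MonotoneOn F (Set.Ici 1) := by
      apply monotoneOn_of_deriv_nonneg (convex_Ici 1)
      · exact contF _ (by intro y hy; simp at hy ⊢; linarith)
      · intro y hy
        rw [interior_Ici] at hy
        exact ((F_deriv y (by linarith [hy.out])).differentiableAt).differentiableWithinAt
      · intro y hy
        rw [interior_Ici] at hy
        have hy1 : (1:ℝ) < y := hy
        rw [(F_deriv y (by linarith)).deriv]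
        have := G_sign_pos hy1.le
        linarith
    have := mono Set.self_mem_Ici (Set.mem_Ici.2 h1) h1
    rw [hF1] at this; exact this
  · have anti : AntitoneOn F (Set.Icc x 1) := by
      apply antitoneOn_of_deriv_nonpos (convex_Icc x 1)
      · exact contF _ (by intro y hy; simp at hy ⊢; exact lt_of_lt_of_le hx hy.1)
      · intro y hy
        rw [interior_Icc] at hy
        exact ((F_deriv y (lt_trans hx hy.1)).differentiableAt).differentiableWithinAt
      · intro y hy
        rw [interior_Icc] at hy
        have := G_sign_neg (lt_trans hx hy.1) hy.2.le
        rw [(F_deriv y (lt_trans hx hy.1)).deriv]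
        linarith
    have := anti (Set.mem_Icc.2 ⟨le_refl x, h1.le⟩) (Set.mem_Icc.2 ⟨h1.le, le_refl 1⟩) h1.le
    rw [hF1] at this; exact this

/-- key pointwise inequality: 3(a-b)² ≤ (2a+4b)(a log(a/b) - a + b) for a ≥ 0, b > 0 -/
lemma key_pointwise {a b : ℝ} (ha : 0 ≤ a) (hb : 0 < b) :
    3*(a-b)^2 ≤ (2*a+4*b)*(a*Real.log (a/b) - a + b) := by
  rcases eq_or_lt_of_le ha with h0 | h0
  · rw [← h0]; simp; nlinarith
  · have hdiv : 0 < a / b := div_pos h0 hb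
    have hF := F_nonneg hdiv
    have hab : a / b * b = a := div_mul_cancel₀ a (ne_of_gt hb)
    set h := a / b with hh
    have ha' : a = h * b := hab.symm
    rw [ha']
    nlinarith [mul_le_mul_of_nonneg_left hF (sq_nonneg b), sq_nonneg b, hb]


lemma integral_cauchy_schwarz {α : Type*} [MeasurableSpace α] {μ : Measure α} {p q : α → ℝ}
    (hp : Integrable (fun x => p x ^ 2) μ) (hq : Integrable (fun x => q x ^ 2) μ)
    (hpq : Integrable (fun x => p x * q x) μ) :
    (∫ x, p x * q x ∂μ) ^ 2 ≤ (∫ x, p x ^ 2 ∂μ) * (∫ x, q x ^ 2 ∂μ) := by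
  set A := ∫ x, p x ^ 2 ∂μ
  set B := ∫ x, q x ^ 2 ∂μ
  set C := ∫ x, p x * q x ∂μ
  have key : ∀ t : ℝ, 0 ≤ A * (t * t) + (2*C) * t + B := by
    intro t
    have h1 : ∀ x, (t * p x + q x)^2 = t^2 * p x ^2 + (2*t) * (p x * q x) + q x ^2 := by
      intro x; ring
    have hi : Integrable (fun x => (t * p x + q x)^2) μ := by
      simp_rw [h1]
      exact ((hp.const_mul _).add (hpq.const_mul _)).add hq
    have h2 : (0:ℝ) ≤ ∫ x, (t * p x + q x)^2 ∂μ :=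
      integral_nonneg fun x => sq_nonneg _
    calc (0:ℝ) ≤ ∫ x, (t * p x + q x)^2 ∂μ := h2
      _ = t^2 * A + (2*t) * C + B := by
          simp_rw [h1]
          rw [integral_add (f := fun x => t ^ 2 * p x ^ 2 + 2 * t * (p x * q x))
              (g := fun x => q x ^ 2) ((hp.const_mul _).add (hpq.const_mul _)) hq,
            integral_add (f := fun x => t ^ 2 * p x ^ 2)
              (g := fun x => 2 * t * (p x * q x)) (hp.const_mul _) (hpq.const_mul _),
            MeasureTheory.integral_const_mul, MeasureTheory.integral_const_mul]
      _ = A * (t * t) + (2*C) * t + B := by ring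
  have := discrim_le_zero key
  rw [discrim] at this
  nlinarith

/-- Csiszár–Kullback inequality:
    ‖f − g‖_{L¹}² ≤ 2 ‖f‖_{L¹} ∫ f ln(f/g). -/

theorem stmt_8 (d : ℕ) (f g : EuclideanSpace ℝ (Fin d) → ℝ)
    (hf : Integrable f) (hg : Integrable g)
    (hf0 : ∀ x, 0 ≤ f x) (hg0 : ∀ᵐ x, 0 < g x)
    (hmass : ∫ x, f x = ∫ x, g x)
    (hent : Integrable (fun x => f x * Real.log (f x / g x))) :
    (∫ x, |f x - g x|) ^ 2
      ≤ 2 * (∫ x, f x) * ∫ x, f x * Real.log (f x / g x) := by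
  set M := ∫ x, f x with hM
  have hM0 : 0 ≤ M := integral_nonneg hf0
  set P : EuclideanSpace ℝ (Fin d) → ℝ :=
    fun x => 3*(f x - g x)^2 / (2*f x + 4*g x) with hP
  set Q : EuclideanSpace ℝ (Fin d) → ℝ := fun x => (2*f x + 4*g x)/3 with hQ
  set p : EuclideanSpace ℝ (Fin d) → ℝ := fun x => Real.sqrt (P x) with hp
  set q : EuclideanSpace ℝ (Fin d) → ℝ := fun x => Real.sqrt (Q x) with hq
  -- a.e. facts
  have hD : ∀ᵐ x, 0 < 2*f x + 4*g x := by
    filter_upwards [hg0] with x hgx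
    have := hf0 x; linarith
  have hPnn : ∀ᵐ x, 0 ≤ P x := by
    filter_upwards [hD] with x hDx
    exact div_nonneg (by positivity) hDx.le
  have hQnn : ∀ᵐ x, 0 ≤ Q x := by
    filter_upwards [hD] with x hDx
    exact div_nonneg hDx.le (by norm_num)
  have hpq_eq : (fun x => p x * q x) =ᵐ[volume] (fun x => |f x - g x|) := by
    filter_upwards [hD, hPnn] with x hDx hPx
    rw [hp, hq]
    rw [← Real.sqrt_mul hPx]
    have hx : P x * Q x = (f x - g x)^2 := by
      rw [hP, hQ]; field_simp; rw [mul_div_assoc, div_self (by linarith), mul_one]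
    rw [hx, Real.sqrt_sq_eq_abs]
  have hp2_eq : (fun x => p x ^ 2) =ᵐ[volume] P := by
    filter_upwards [hPnn] with x hPx
    exact Real.sq_sqrt hPx
  have hq2_eq : (fun x => q x ^ 2) =ᵐ[volume] Q := by
    filter_upwards [hQnn] with x hQx
    exact Real.sq_sqrt hQx
  have hPle : ∀ᵐ x, P x ≤ f x * Real.log (f x / g x) - f x + g x := by
    filter_upwards [hg0, hD] with x hgx hDx
    rw [hP, div_le_iff₀ hDx]
    have := key_pointwise (hf0 x) hgx
    nlinarith
  have hPbound : ∀ᵐ x, ‖P x‖ ≤ ‖(3/2) * (f x + g x)‖ := by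
    filter_upwards [hg0, hD, hPnn] with x hgx hDx hPx
    have hfx := hf0 x
    have h1 : P x ≤ (3/2) * (f x + g x) := by
      rw [hP, div_le_iff₀ hDx]; nlinarith
    rw [Real.norm_eq_abs, Real.norm_eq_abs, abs_of_nonneg hPx,
      abs_of_nonneg (by linarith : (0:ℝ) ≤ (3/2)*(f x + g x))]
    exact h1
  -- integrability
  have hPm : AEStronglyMeasurable P volume := by
    have hfm := hf.aestronglyMeasurable.aemeasurable
    have hgm := hg.aestronglyMeasurable.aemeasurable
    exact (((((hfm.sub hgm).pow_const 2).const_mul 3).div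
      ((hfm.const_mul 2).add (hgm.const_mul 4)))).aestronglyMeasurable
  have hPint : Integrable P := ((hf.add hg).const_mul (3/2)).mono hPm hPbound
  have hQint : Integrable Q := ((hf.const_mul 2).add (hg.const_mul 4)).div_const 3
  have hp2int : Integrable (fun x => p x ^ 2) := hPint.congr hp2_eq.symm
  have hq2int : Integrable (fun x => q x ^ 2) := hQint.congr hq2_eq.symm
  have habs : Integrable (fun x => |f x - g x|) := by
    have := (hf.sub hg).abs
    exact this.congr (by filter_upwards with x; simp)
  have hpqint : Integrable (fun x => p x * q x) := habs.congr hpq_eq.symm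
  -- integrals
  have hC : ∫ x, |f x - g x| = ∫ x, p x * q x := integral_congr_ae hpq_eq.symm
  have hQval : ∫ x, q x ^ 2 = 2 * M := by
    rw [integral_congr_ae hq2_eq, hQ]
    rw [integral_div, integral_add (hf.const_mul 2) (hg.const_mul 4),
      MeasureTheory.integral_const_mul, MeasureTheory.integral_const_mul, ← hmass, ← hM]
    ring
  have hPval : ∫ x, p x ^ 2 ≤ ∫ x, f x * Real.log (f x / g x) := by
    rw [integral_congr_ae hp2_eq]
    have h1 : ∫ x, P x ≤ ∫ x, (f x * Real.log (f x / g x) - f x + g x) :=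
      integral_mono_ae hPint ((hent.sub hf).add hg) hPle
    have h2 : ∫ x, (f x * Real.log (f x / g x) - f x + g x)
        = ∫ x, f x * Real.log (f x / g x) := by
      rw [integral_add (f := fun x => f x * Real.log (f x / g x) - f x) (g := fun x => g x)
        (hent.sub hf) hg, integral_sub hent hf, ← hM, ← hmass]
      ring
    linarith
  have hcs := integral_cauchy_schwarz hp2int hq2int hpqint
  rw [hC]
  calc (∫ x, p x * q x) ^ 2 ≤ (∫ x, p x ^ 2) * (∫ x, q x ^ 2) := hcs
    _ ≤ (∫ x, f x * Real.log (f x / g x)) * (2 * M) := by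
        rw [hQval]
        exact mul_le_mul_of_nonneg_right hPval (by linarith)
    _ = 2 * M * ∫ x, f x * Real.log (f x / g x) := by ring
end

section
/- Let κ > 0 and let τ : [0,∞) → (0,∞) be the solution of τ'' = 2κ/τ, τ(0)=1, τ'(0)=0. Then ∫₀^∞ (τ'(t)/τ(t))² dt < ∞ and ∫₀^∞ dt/τ(t)² < ∞. -/
open Set MeasureTheory

private lemma aux_integrable (f : ℝ → ℝ) (hf : ContinuousOn f (Ici 0))
    (C a : ℝ) (ha : a < -1)
    (hbound : ∀ t ∈ Ici (1:ℝ), |f t| ≤ C * t ^ a) :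
    IntegrableOn f (Ici 0) := by
  have h1 : IntegrableOn f (Icc 0 1) :=
    (hf.mono Icc_subset_Ici_self).integrableOn_compact isCompact_Icc
  have h2 : IntegrableOn f (Ici 1) := by
    rw [integrableOn_Ici_iff_integrableOn_Ioi]
    have hg : IntegrableOn (fun t : ℝ => C * t ^ a) (Ioi 1) :=
      (integrableOn_Ioi_rpow_of_lt ha one_pos).const_mul C
    refine Integrable.mono' hg
      ((hf.mono fun x hx => Set.mem_Ici.mpr (le_of_lt (lt_trans one_pos (Set.mem_Ioi.mp hx)))).aestronglyMeasurable
        measurableSet_Ioi) ?_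
    filter_upwards [ae_restrict_mem measurableSet_Ioi] with t ht
    simpa [Real.norm_eq_abs] using hbound t (Set.mem_Ici.mpr (le_of_lt (Set.mem_Ioi.mp ht)))
  rw [← Icc_union_Ici_eq_Ici (zero_le_one (α := ℝ))]
  exact h1.union h2

/-- For the solution of τ'' = 2κ/τ, τ(0)=1, τ'(0)=0, the functions
    (τ'/τ)² and 1/τ² are integrable on [0,∞). -/
theorem stmt_17 (κ : ℝ) (hκ : 0 < κ)
    (τ τ' : ℝ → ℝ)
    (hpos : ∀ t ∈ Ici (0:ℝ), 0 < τ t)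
    (hτ : ∀ t ∈ Ici (0:ℝ), HasDerivAt τ (τ' t) t)
    (hτ' : ∀ t ∈ Ici (0:ℝ), HasDerivAt τ' (2 * κ / τ t) t)
    (h0 : τ 0 = 1) (h0' : τ' 0 = 0) :
    IntegrableOn (fun t => (τ' t / τ t) ^ 2) (Ici 0) ∧
      IntegrableOn (fun t => 1 / (τ t) ^ 2) (Ici 0) := by
  have hIoi : (Ioi (0:ℝ)) ⊆ Ici 0 := Ioi_subset_Ici_self
  have hcτ : ContinuousOn τ (Ici 0) := fun t ht =>
    (hτ t ht).continuousAt.continuousWithinAt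
  have hcτ' : ContinuousOn τ' (Ici 0) := fun t ht =>
    (hτ' t ht).continuousAt.continuousWithinAt
  have hint : interior (Ici (0:ℝ)) = Ioi 0 := interior_Ici
  -- τ' is strictly monotone on Ici 0
  have hτ'mono : StrictMonoOn τ' (Ici 0) := by
    apply strictMonoOn_of_deriv_pos (convex_Ici 0) hcτ'
    intro x hx
    rw [hint] at hx
    rw [(hτ' x (hIoi hx)).deriv]
    exact div_pos (by linarith) (hpos x (hIoi hx))
  -- τ' is nonnegative on Ici 0
  have hτ'nn : ∀ t ∈ Ici (0:ℝ), 0 ≤ τ' t := by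
    intro t ht
    rcases eq_or_lt_of_le (Set.mem_Ici.mp ht) with h | h
    · rw [← h, h0']
    · rw [← h0']
      exact le_of_lt (hτ'mono (self_mem_Ici) ht h)
  -- τ is monotone on Ici 0, hence τ ≥ 1
  have hτmono : MonotoneOn τ (Ici 0) := by
    apply monotoneOn_of_deriv_nonneg (convex_Ici 0) hcτ
    · intro x hx
      rw [hint] at hx
      exact (hτ x (hIoi hx)).differentiableAt.differentiableWithinAt
    · intro x hx
      rw [hint] at hx
      rw [(hτ x (hIoi hx)).deriv]
      exact hτ'nn x (hIoi hx)
  have hτge1 : ∀ t ∈ Ici (0:ℝ), 1 ≤ τ t := by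
    intro t ht
    rw [← h0]
    exact hτmono self_mem_Ici ht ht
  -- linear lower bound: τ t ≥ m * t for t ≥ 1, with m = min (τ' 1) 1
  set c := τ' 1 with hc
  have hcpos : 0 < c := by
    rw [hc, ← h0']
    exact hτ'mono self_mem_Ici (by norm_num) one_pos
  -- h t = τ t - c * t is monotone on Ici 1
  have hhmono : MonotoneOn (fun t => τ t - c * t) (Ici 1) := by
    apply monotoneOn_of_deriv_nonneg (convex_Ici 1)
    · exact ((hcτ.mono (Ici_subset_Ici.mpr zero_le_one)).sub
        (continuous_const.mul continuous_id).continuousOn)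
    · intro x hx
      rw [interior_Ici] at hx
      have hx0 : x ∈ Ici (0:ℝ) := Set.mem_Ici.mpr (le_of_lt (lt_trans one_pos (Set.mem_Ioi.mp hx)))
      exact (((hτ x hx0).sub ((hasDerivAt_id x).const_mul c)).differentiableAt).differentiableWithinAt
    · intro x hx
      rw [interior_Ici] at hx
      have hx0 : x ∈ Ici (0:ℝ) := Set.mem_Ici.mpr (le_of_lt (lt_trans one_pos (Set.mem_Ioi.mp hx)))
      have hd : HasDerivAt (fun t => τ t - c * t) (τ' x - c * 1) x :=
        (hτ x hx0).sub ((hasDerivAt_id x).const_mul c)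
      rw [hd.deriv]
      have : c ≤ τ' x := hτ'mono.monotoneOn (by norm_num) hx0 (le_of_lt (Set.mem_Ioi.mp hx))
      linarith
  set m := min c 1 with hm
  have hmpos : 0 < m := lt_min hcpos one_pos
  have hm1 : m ≤ 1 := min_le_right _ _
  have hmc : m ≤ c := min_le_left _ _
  have hlin : ∀ t ∈ Ici (1:ℝ), m * t ≤ τ t := by
    intro t ht
    have h1 : τ 1 - c * 1 ≤ τ t - c * t := hhmono self_mem_Ici ht ht
    have h2 : 1 ≤ τ 1 := hτge1 1 (by norm_num)
    have ht1 : (1:ℝ) ≤ t := Set.mem_Ici.mp ht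
    nlinarith
  -- energy identity: (τ' t)^2 ≤ 4κ log (τ t)
  have hE : ∀ t ∈ Ici (0:ℝ), (τ' t) ^ 2 ≤ 4 * κ * Real.log (τ t) := by
    have hEanti : AntitoneOn (fun t => (τ' t) ^ 2 - 4 * κ * Real.log (τ t)) (Ici 0) := by
      have hdE : ∀ x ∈ Ici (0:ℝ), HasDerivAt (fun t => (τ' t) ^ 2 - 4 * κ * Real.log (τ t))
          (2 * τ' x * (2 * κ / τ x) - 4 * κ * (τ' x / τ x)) x := by
        intro x hx
        have h1 : HasDerivAt (fun t => (τ' t) ^ 2) (2 * τ' x ^ 1 * (2 * κ / τ x)) x :=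
          (hτ' x hx).pow 2
        have h2 : HasDerivAt (fun t => Real.log (τ t)) (τ' x / τ x) x :=
          (hτ x hx).log (ne_of_gt (hpos x hx))
        have h3 := h1.sub (h2.const_mul (4 * κ))
        rw [pow_one] at h3
        exact h3
      apply antitoneOn_of_deriv_nonpos (convex_Ici 0)
      · exact fun x hx => (hdE x hx).continuousAt.continuousWithinAt
      · intro x hx
        rw [hint] at hx
        exact (hdE x (hIoi hx)).differentiableAt.differentiableWithinAt
      · intro x hx
        rw [hint] at hx
        rw [(hdE x (hIoi hx)).deriv]
        have hτx : τ x ≠ 0 := ne_of_gt (hpos x (hIoi hx))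
        have hz : 2 * τ' x * (2 * κ / τ x) - 4 * κ * (τ' x / τ x) = 0 := by
          field_simp; ring
        exact hz.le
    intro t ht
    have := hEanti self_mem_Ici ht ht
    simp only [h0, h0', Real.log_one] at this
    linarith
  -- log bound: log x ≤ 2 √x
  have hlog : ∀ x : ℝ, 1 ≤ x → Real.log x ≤ 2 * Real.sqrt x := by
    intro x hx
    have h0x : (0:ℝ) ≤ x := le_trans zero_le_one hx
    have : Real.log (Real.sqrt x) ≤ Real.sqrt x - 1 :=
      Real.log_le_sub_one_of_pos (Real.sqrt_pos.mpr (lt_of_lt_of_le one_pos hx))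
    rw [Real.log_sqrt h0x] at this
    linarith
  constructor
  · -- first integral
    refine aux_integrable _ ?_ (8 * κ * m ^ (-(3:ℝ)/2)) (-(3:ℝ)/2) (by norm_num) ?_
    · exact (hcτ'.div hcτ fun x hx => ne_of_gt (hpos x hx)).pow 2
    · intro t ht
      have ht0 : t ∈ Ici (0:ℝ) := Set.mem_Ici.mpr (le_trans zero_le_one (Set.mem_Ici.mp ht))
      have htpos : (0:ℝ) < t := lt_of_lt_of_le one_pos (Set.mem_Ici.mp ht)
      have hτt : 0 < τ t := hpos t ht0
      have h1 : (τ' t / τ t) ^ 2 = (τ' t) ^ 2 / (τ t) ^ 2 := by ring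
      have h2 : (τ' t) ^ 2 ≤ 8 * κ * Real.sqrt (τ t) := by
        have := hE t ht0
        have := hlog (τ t) (hτge1 t ht0)
        nlinarith
      have habs : |(τ' t / τ t) ^ 2| = (τ' t / τ t) ^ 2 := abs_of_nonneg (sq_nonneg _)
      rw [habs, h1]
      have h3 : (τ' t) ^ 2 / (τ t) ^ 2 ≤ 8 * κ * ((τ t) ^ (-(3:ℝ)/2)) := by
        have hs : Real.sqrt (τ t) = (τ t) ^ ((1:ℝ)/2) := Real.sqrt_eq_rpow _
        have hτ2 : (τ t) ^ (2:ℕ) = (τ t) ^ ((2:ℝ)) := by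
          rw [← Real.rpow_natCast (τ t) 2]; norm_num
        rw [div_le_iff₀ (by positivity)]
        calc (τ' t) ^ 2 ≤ 8 * κ * Real.sqrt (τ t) := h2
          _ = 8 * κ * ((τ t) ^ (-(3:ℝ)/2)) * (τ t) ^ (2:ℕ) := by
              rw [hs, hτ2, mul_assoc, mul_assoc, ← Real.rpow_add hτt]
              norm_num; ring
      refine le_trans h3 ?_
      have h4 : (τ t) ^ (-(3:ℝ)/2) ≤ (m * t) ^ (-(3:ℝ)/2) := by
        apply Real.rpow_le_rpow_of_nonpos (by positivity) (hlin t ht) (by norm_num)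
      have h5 : (m * t) ^ (-(3:ℝ)/2) = m ^ (-(3:ℝ)/2) * t ^ (-(3:ℝ)/2) :=
        Real.mul_rpow (le_of_lt hmpos) (le_of_lt htpos)
      calc 8 * κ * ((τ t) ^ (-(3:ℝ)/2)) ≤ 8 * κ * ((m * t) ^ (-(3:ℝ)/2)) := by
            apply mul_le_mul_of_nonneg_left h4 (by positivity)
        _ = 8 * κ * m ^ (-(3:ℝ)/2) * t ^ (-(3:ℝ)/2) := by rw [h5]; ring
  · -- second integral
    refine aux_integrable _ ?_ (m ^ (-(2:ℝ))) (-2) (by norm_num) ?_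
    · exact continuousOn_const.div (hcτ.pow 2) fun x hx => ne_of_gt (pow_pos (hpos x hx) 2)
    · intro t ht
      have ht0 : t ∈ Ici (0:ℝ) := Set.mem_Ici.mpr (le_trans zero_le_one (Set.mem_Ici.mp ht))
      have htpos : (0:ℝ) < t := lt_of_lt_of_le one_pos (Set.mem_Ici.mp ht)
      have hτt : 0 < τ t := hpos t ht0
      have habs : |1 / (τ t) ^ 2| = 1 / (τ t) ^ 2 := abs_of_nonneg (by positivity)
      rw [habs]
      have h1 : 1 / (τ t) ^ 2 ≤ 1 / (m * t) ^ 2 := by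
        apply one_div_le_one_div_of_le (by positivity)
        exact pow_le_pow_left₀ (le_of_lt (mul_pos hmpos htpos)) (hlin t ht) 2
      refine le_trans h1 ?_
      have h2 : (1:ℝ) / (m * t) ^ 2 = m ^ (-(2:ℝ)) * t ^ (-(2:ℝ)) := by
        rw [Real.rpow_neg (le_of_lt hmpos), Real.rpow_neg (le_of_lt htpos),
          Real.rpow_two, Real.rpow_two]
        field_simp
      rw [h2]
end
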